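/- Let a < b, τ > 0, let Σ be a nonempty finite index set with weights ω_p > 0 and predicted values ũ_p ∈ ℝ for p ∈ Σ, and let m ∈ ℝ satisfy a·Σ_{p∈Σ} ω_p ≤ m ≤ b·Σ_{p∈Σ} ω_p. Then there exist ξ ∈ ℝ and families (u_p)_{p∈Σ}, (λ_p)_{p∈Σ} of real numbers such that for every p ∈ Σ: (u_p − ũ_p)/τ = λ_p·g'(u_p) + ξ, λ_p ≥ 0, g(u_p) ≥ 0, λ_p·g(u_p) = 0, and moreover u_p = cutoff(ũ_p + τξ), a ≤ u_p ≤ b, and Σ_{p∈Σ} ω_p u_p = m. In other words, the mass- and bound-preserving corrector step is solvable, its solution is given by the shifted cutoff, and it preserves both the bounds [a,b] and the total mass m exactly. -/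

import Mathlib

section aux

variable {a b τ : ℝ}

/-- Pointwise KKT solution via shifted cutoff. -/
lemma cutoff_kkt (hab : a < b) (hτ : 0 < τ) (v ξ : ℝ) :
    let u := max a (min b (v + τ * ξ))
    let lam := ((u - v) / τ - ξ) / (a + b - 2 * u)
    (u - v) / τ = lam * (a + b - 2 * u) + ξ ∧
    0 ≤ lam ∧ 0 ≤ (b - u) * (u - a) ∧ lam * ((b - u) * (u - a)) = 0 ∧
    a ≤ u ∧ u ≤ b := by
  intro u lam
  set x := v + τ * ξ with hx
  have hab' : a ≤ b := hab.le
  have hua : a ≤ u := le_max_left _ _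
  have hub : u ≤ b := max_le hab' (min_le_left _ _)
  rcases lt_or_ge x a with h1 | h1
  · -- clamped below: u = a
    have hu : u = a := by
      have : min b x = x := min_eq_right (le_of_lt (h1.trans hab))
      rw [show u = max a (min b x) from rfl, this, max_eq_left h1.le]
    have hnum : 0 < (u - v) / τ - ξ := by
      rw [hu]
      have : v < a - τ * ξ := by linarith [h1]
      have : 0 < (a - v) / τ - ξ := by
        rw [sub_pos, lt_div_iff₀ hτ]; nlinarith
      simpa using this
    have hden : 0 < a + b - 2 * u := by rw [hu]; linarith
    have hlam : 0 ≤ lam := le_of_lt (div_pos hnum hden)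
    have hstat : (u - v) / τ = lam * (a + b - 2 * u) + ξ := by
      have := div_mul_cancel₀ ((u - v) / τ - ξ) (ne_of_gt hden)
      simp only [lam]; linarith [this]
    refine ⟨hstat, hlam, ?_, ?_, hua, hub⟩
    · rw [hu]; nlinarith
    · rw [hu]; ring_nf
  rcases le_or_gt x b with h2 | h2
  · -- interior: u = x
    have hu : u = x := by rw [show u = max a (min b x) from rfl, min_eq_right h2, max_eq_right h1]
    have hnum : (u - v) / τ - ξ = 0 := by
      rw [hu, hx]; field_simp; ring
    have hlam : lam = 0 := by simp [lam, hnum]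
    refine ⟨?_, le_of_eq hlam.symm, ?_, by simp [hlam], hua, hub⟩
    · rw [hlam]; linarith [hnum]
    · nlinarith
  · -- clamped above: u = b
    have hu : u = b := by
      have : min b x = b := min_eq_left h2.le
      rw [show u = max a (min b x) from rfl, this, max_eq_right hab']
    have hnum : (u - v) / τ - ξ < 0 := by
      rw [hu, sub_neg, div_lt_iff₀ hτ]; nlinarith
    have hden : a + b - 2 * u < 0 := by rw [hu]; linarith
    have hlam : 0 ≤ lam := le_of_lt (div_pos_of_neg_of_neg hnum hden)
    have hstat : (u - v) / τ = lam * (a + b - 2 * u) + ξ := by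
      have := div_mul_cancel₀ ((u - v) / τ - ξ) (ne_of_lt hden)
      simp only [lam]; linarith [this]
    refine ⟨hstat, hlam, ?_, ?_, hua, hub⟩
    · rw [hu]; nlinarith
    · rw [hu]; ring_nf

end aux

/-- Solvability of the mass- and bound-preserving corrector step: if the target mass is
admissible, there is a global multiplier `ξ`, corrected values `u_p` and pointwise
multipliers `λ_p` satisfying the KKT system; the solution is the shifted cutoff, the
bounds `[a, b]` hold, and the total mass is preserved exactly. -/
theorem stmt_4 {ι : Type*} (a b τ m : ℝ) (hab : a < b) (hτ : 0 < τ)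
    (S : Finset ι) (hS : S.Nonempty) (ω : ι → ℝ) (hω : ∀ p ∈ S, 0 < ω p)
    (uPred : ι → ℝ)
    (hm₁ : a * ∑ p ∈ S, ω p ≤ m) (hm₂ : m ≤ b * ∑ p ∈ S, ω p) :
    ∃ (ξ : ℝ) (u lam : ι → ℝ),
      (∀ p ∈ S,
        (u p - uPred p) / τ = lam p * (a + b - 2 * u p) + ξ ∧
        0 ≤ lam p ∧
        0 ≤ (b - u p) * (u p - a) ∧
        lam p * ((b - u p) * (u p - a)) = 0 ∧
        u p = max a (min b (uPred p + τ * ξ)) ∧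
        a ≤ u p ∧ u p ≤ b) ∧
      ∑ p ∈ S, ω p * u p = m := by
  -- the mass function
  set f : ℝ → ℝ := fun ξ => ∑ p ∈ S, ω p * max a (min b (uPred p + τ * ξ)) with hf
  have hcont : Continuous f := by
    apply continuous_finset_sum
    intro p _
    fun_prop
  set ξ₁ : ℝ := (a - S.sup' hS uPred) / τ with hξ₁
  set ξ₂ : ℝ := (b - S.inf' hS uPred) / τ with hξ₂
  have hinfsup : S.inf' hS uPred ≤ S.sup' hS uPred := by
    obtain ⟨q, hq⟩ := hS
    exact le_trans (Finset.inf'_le _ hq) (Finset.le_sup' _ hq)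
  have h12 : ξ₁ ≤ ξ₂ := by
    rw [hξ₁, hξ₂]
    gcongr <;> linarith
  have hfξ₁ : f ξ₁ = a * ∑ p ∈ S, ω p := by
    rw [hf, Finset.mul_sum]
    apply Finset.sum_congr rfl
    intro p hp
    have hle : uPred p + τ * ξ₁ ≤ a := by
      have h1 : uPred p ≤ S.sup' hS uPred := Finset.le_sup' _ hp
      have : τ * ξ₁ = a - S.sup' hS uPred := by
        rw [hξ₁]; field_simp
      linarith
    rw [min_eq_right (hle.trans hab.le), max_eq_left hle, mul_comm]
  have hfξ₂ : f ξ₂ = b * ∑ p ∈ S, ω p := by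
    rw [hf, Finset.mul_sum]
    apply Finset.sum_congr rfl
    intro p hp
    have hle : b ≤ uPred p + τ * ξ₂ := by
      have h1 : S.inf' hS uPred ≤ uPred p := Finset.inf'_le _ hp
      have : τ * ξ₂ = b - S.inf' hS uPred := by
        rw [hξ₂]; field_simp
      linarith
    rw [min_eq_left hle, max_eq_right hab.le, mul_comm]
  have hmem : m ∈ Set.Icc (f ξ₁) (f ξ₂) := by
    rw [hfξ₁, hfξ₂]; exact ⟨hm₁, hm₂⟩
  obtain ⟨ξ, -, hξ⟩ := intermediate_value_Icc h12 hcont.continuousOn hmem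
  refine ⟨ξ, fun p => max a (min b (uPred p + τ * ξ)),
    fun p => ((max a (min b (uPred p + τ * ξ)) - uPred p) / τ - ξ) /
      (a + b - 2 * max a (min b (uPred p + τ * ξ))), ?_, hξ⟩
  intro p hp
  obtain ⟨h1, h2, h3, h4, h5, h6⟩ := cutoff_kkt hab hτ (uPred p) ξ
  exact ⟨h1, h2, h3, h4, rfl, h5, h6⟩
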